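/- Let a : (0,1] → ℝ be C¹ with a(x) > 0 on (0,1] and satisfy x·|a'(x)| ≤ α·a(x) for some α ∈ [0,1). Then ∫_0^1 τ/a(τ) dτ ≤ 1 / (a(1)·(2−α)). -/

import Mathlib

open Real Set MeasureTheory

/-- Under (H2), `∫_0^1 τ/a(τ) dτ ≤ 1/(a(1)·(2−α))`. -/
theorem stmt3 (a a' : ℝ → ℝ) (α : ℝ)
    (hα0 : 0 ≤ α) (hα1 : α < 1)
    (hpos : ∀ x ∈ Ioc (0:ℝ) 1, 0 < a x)
    (hderiv : ∀ x ∈ Ioc (0:ℝ) 1, HasDerivAt a (a' x) x)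
    (hcont : ContinuousOn a' (Ioc (0:ℝ) 1))
    (hbound : ∀ x ∈ Ioc (0:ℝ) 1, x * |a' x| ≤ α * a x) :
    IntegrableOn (fun τ => τ / a τ) (Ioc (0:ℝ) 1) ∧
      ∫ τ in Ioc (0:ℝ) 1, τ / a τ ≤ 1 / (a 1 * (2 - α)) := by
  have ha1 : 0 < a 1 := hpos 1 ⟨one_pos, le_refl 1⟩
  set F : ℝ → ℝ := fun t => a t * t ^ (-α) with hFdef
  have hFd : ∀ t ∈ Ioc (0:ℝ) 1, HasDerivAt F
      ((t * a' t - α * a t) * t ^ (-α - 1)) t := by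
    intro t ht
    have ht0 : (0:ℝ) < t := ht.1
    have h1 := (hderiv t ht).mul
      (Real.hasDerivAt_rpow_const (p := -α) (Or.inl (ne_of_gt ht0)))
    have hts : t ^ (-α) = t ^ (-α - 1) * t := by
      rw [← Real.rpow_add_one (ne_of_gt ht0)]; ring_nf
    refine h1.congr_deriv ?_
    rw [hts]; ring
  -- key lower bound a 1 * x^α ≤ a x
  have key : ∀ x ∈ Ioc (0:ℝ) 1, a 1 * x ^ α ≤ a x := by
    intro x hx
    have hx0 : (0:ℝ) < x := hx.1
    have hsub : Icc x 1 ⊆ Ioc (0:ℝ) 1 := fun t ht => ⟨lt_of_lt_of_le hx0 ht.1, ht.2⟩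
    have hFcont : ContinuousOn F (Icc x 1) := fun t ht =>
      (hFd t (hsub ht)).continuousAt.continuousWithinAt
    have hint : interior (Icc x 1) = Ioo x 1 := interior_Icc
    have hanti : AntitoneOn F (Icc x 1) := by
      apply antitoneOn_of_deriv_nonpos (convex_Icc x 1) hFcont
      · intro t ht
        rw [hint] at ht
        exact ((hFd t (hsub (Ioo_subset_Icc_self ht))).differentiableAt).differentiableWithinAt
      · intro t ht
        rw [hint] at ht
        have ht' := hsub (Ioo_subset_Icc_self ht)
        rw [(hFd t ht').deriv]
        have h1 : t * a' t - α * a t ≤ 0 := by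
          have := hbound t ht'
          have h2 : t * a' t ≤ t * |a' t| :=
            mul_le_mul_of_nonneg_left (le_abs_self _) ht'.1.le
          linarith
        have h2 : (0:ℝ) ≤ t ^ (-α - 1) := Real.rpow_nonneg ht'.1.le _
        exact mul_nonpos_of_nonpos_of_nonneg h1 h2
    have hF1 : F 1 ≤ F x := hanti ⟨le_refl x, hx.2⟩ ⟨hx.2, le_refl 1⟩ hx.2
    have h1 : F 1 = a 1 := by simp [hFdef]
    have h2 : F x = a x * x ^ (-α) := rfl
    rw [h1, h2] at hF1
    have hxα : (0:ℝ) < x ^ α := Real.rpow_pos_of_pos hx0 _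
    have := mul_le_mul_of_nonneg_right hF1 hxα.le
    calc a 1 * x ^ α ≤ a x * x ^ (-α) * x ^ α := this
      _ = a x := by
        rw [mul_assoc, ← Real.rpow_add hx0]
        simp
  -- dominating function
  have hdom : ∀ τ ∈ Ioc (0:ℝ) 1, τ / a τ ≤ τ ^ (1 - α) / a 1 := by
    intro τ hτ
    have hτ0 : (0:ℝ) < τ := hτ.1
    have hτα : (0:ℝ) < τ ^ α := Real.rpow_pos_of_pos hτ0 _
    have hlow : 0 < a 1 * τ ^ α := mul_pos ha1 hτα
    have h1 : τ / a τ ≤ τ / (a 1 * τ ^ α) :=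
      div_le_div_of_nonneg_left hτ0.le hlow (key τ hτ)
    have h2 : τ / (a 1 * τ ^ α) = τ ^ (1 - α) / a 1 := by
      rw [Real.rpow_sub hτ0, Real.rpow_one, div_div, mul_comm]
    linarith [h1, h2.le, h2.ge]
  have hnn : ∀ τ ∈ Ioc (0:ℝ) 1, 0 ≤ τ / a τ := fun τ hτ =>
    div_nonneg hτ.1.le (hpos τ hτ).le
  -- integrability of the dominating function
  have hgint : IntegrableOn (fun τ : ℝ => τ ^ (1 - α) / a 1) (Ioc (0:ℝ) 1) := by
    have : IntervalIntegrable (fun τ : ℝ => τ ^ (1 - α)) volume 0 1 :=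
      intervalIntegral.intervalIntegrable_rpow' (by linarith)
    exact (this.1).div_const _
  -- measurability / continuity of the integrand
  have hacont : ContinuousOn a (Ioc (0:ℝ) 1) := fun x hx =>
    (hderiv x hx).continuousAt.continuousWithinAt
  have hfcont : ContinuousOn (fun τ : ℝ => τ / a τ) (Ioc (0:ℝ) 1) :=
    ContinuousOn.div continuousOn_id hacont (fun x hx => (hpos x hx).ne')
  have hfmeas : AEStronglyMeasurable (fun τ : ℝ => τ / a τ)
      (volume.restrict (Ioc (0:ℝ) 1)) :=
    hfcont.aestronglyMeasurable measurableSet_Ioc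
  have hfint : IntegrableOn (fun τ : ℝ => τ / a τ) (Ioc (0:ℝ) 1) := by
    apply Integrable.mono' hgint hfmeas
    rw [ae_restrict_iff' measurableSet_Ioc]
    filter_upwards with τ hτ
    rw [Real.norm_eq_abs, abs_of_nonneg (hnn τ hτ)]
    exact hdom τ hτ
  refine ⟨hfint, ?_⟩
  have hle : ∫ τ in Ioc (0:ℝ) 1, τ / a τ ≤ ∫ τ in Ioc (0:ℝ) 1, τ ^ (1 - α) / a 1 :=
    setIntegral_mono_on hfint hgint measurableSet_Ioc hdom
  have hcalc : ∫ τ in Ioc (0:ℝ) 1, τ ^ (1 - α) / a 1 = 1 / (a 1 * (2 - α)) := by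
    rw [integral_div]
    have h1 : ∫ τ in Ioc (0:ℝ) 1, τ ^ (1 - α) = ∫ τ in (0:ℝ)..1, τ ^ (1 - α) :=
      (intervalIntegral.integral_of_le zero_le_one).symm
    rw [h1, integral_rpow (Or.inl (by linarith))]
    rw [Real.one_rpow, Real.zero_rpow (by linarith)]
    rw [sub_zero, div_div, show (1:ℝ) - α + 1 = 2 - α by ring, mul_comm]
  linarith [hle, hcalc.le, hcalc.ge]
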